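/- arXiv:2109.09629 — 2 statements merged into one kernel-verified Lean document; each statement's English description precedes it below -/
import Mathlib

section
/- Let n ≥ 1, d = 2^n, let Γ = Σ_k (ψ_k ψ_k†)^T ⊗ (ψ_k ψ_k†) be built from tensor products ψ_k = ψ_{1,k_1} ⊗ ⋯ ⊗ ψ_{n,k_n} of single-qubit SIC-POVM states, and let φ = (1/√d) Σ_{x=1}^d e_x ⊗ e_x ∈ ℂ^{d²}. Then Γ φ = d·φ, i.e., φ is an eigenvector of Γ with eigenvalue d. -/
open Matrix Polynomial
open scoped Kronecker ComplexOrder Classical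

noncomputable section

/-- Hermitian inner product on `m → ℂ`, conjugate-linear in the first argument. -/
def cinner {m : Type*} [Fintype m] (v w : m → ℂ) : ℂ :=
  ∑ a, (starRingEnd ℂ) (v a) * w a

/-- A single-qubit SIC-POVM: four unit vectors in ℂ² with pairwise squared overlaps 1/3. -/
def IsSICPOVM (ψ : Fin 4 → Fin 2 → ℂ) : Prop :=
  (∀ k, cinner (ψ k) (ψ k) = 1) ∧
  ∀ k k', k ≠ k' → ‖cinner (ψ k) (ψ k')‖ ^ 2 = 1 / 3

/-- Tensor product state `ψ_k = ψ_{1,k_1} ⊗ ⋯ ⊗ ψ_{n,k_n}` on `ℂ^(2^n)`,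
    whose coordinates are indexed by `Fin n → Fin 2`. -/
def prodState {n : ℕ} (ψ : Fin n → Fin 4 → Fin 2 → ℂ) (k : Fin n → Fin 4) :
    (Fin n → Fin 2) → ℂ :=
  fun x => ∏ i, ψ i (k i) (x i)

/-- The rank-one projector `ψψ†` onto a vector. -/
def proj {m : Type*} (v : m → ℂ) : Matrix m m ℂ :=
  Matrix.vecMulVec v (star v)

/-- The matrix `Γ = Σ_k (ψ_k ψ_k†)ᵀ ⊗ (ψ_k ψ_k†)`. -/
def Gam {n : ℕ} (ψ : Fin n → Fin 4 → Fin 2 → ℂ) :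
    Matrix ((Fin n → Fin 2) × (Fin n → Fin 2)) ((Fin n → Fin 2) × (Fin n → Fin 2)) ℂ :=
  ∑ k : Fin n → Fin 4, (proj (prodState ψ k))ᵀ ⊗ₖ proj (prodState ψ k)

/-- The maximally entangled vector `φ = (1/√d) Σ_x e_x ⊗ e_x`, `d = 2^n`. -/
def maxEnt (n : ℕ) : (Fin n → Fin 2) × (Fin n → Fin 2) → ℂ :=
  fun p => if p.1 = p.2 then (((Real.sqrt (2 ^ n))⁻¹ : ℝ) : ℂ) else 0


lemma cinner_conj {m : Type*} [Fintype m] (v w : m → ℂ) :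
    (starRingEnd ℂ) (cinner v w) = cinner w v := by
  simp [cinner, map_sum, mul_comm]

lemma sic_sum (ψ : Fin 4 → Fin 2 → ℂ) (h : IsSICPOVM ψ) (a b : Fin 2) :
    ∑ k, (starRingEnd ℂ) (ψ k a) * ψ k b = if a = b then 2 else 0 := by
  set S : Fin 2 → Fin 2 → ℂ := fun a b => ∑ k, (starRingEnd ℂ) (ψ k a) * ψ k b with hS
  have hconj : ∀ a b, (starRingEnd ℂ) (S a b) = S b a := by
    intro a b; simp [hS, map_sum, mul_comm]
  have htr : ∑ a, S a a = 4 := by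
    have e : ∑ a, S a a = ∑ k, cinner (ψ k) (ψ k) := by
      simp only [hS, cinner]; exact Finset.sum_comm
    rw [e]
    simp [h.1]
  have hterm : ∀ k k', cinner (ψ k) (ψ k') * cinner (ψ k') (ψ k)
      = if k = k' then (1:ℂ) else 1/3 := by
    intro k k'
    have hc : cinner (ψ k') (ψ k) = (starRingEnd ℂ) (cinner (ψ k) (ψ k')) :=
      (cinner_conj _ _).symm
    by_cases hkk : k = k'
    · subst hkk; simp [h.1 k]
    · rw [hc, Complex.mul_conj, if_neg hkk]
      have := h.2 k k' hkk
      rw [← Complex.sq_norm, this]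
      norm_num
  have h8 : ∑ a, ∑ b, S a b * S b a = 8 := by
    have step : ∑ a, ∑ b, S a b * S b a
        = ∑ k, ∑ k', cinner (ψ k) (ψ k') * cinner (ψ k') (ψ k) := by
      simp only [hS, cinner, Fin.sum_univ_two, Fin.sum_univ_four]
      ring
    rw [step]
    simp only [hterm]
    have hrow : ∀ k : Fin 4, ∑ k' : Fin 4, (if k = k' then (1:ℂ) else 1/3) = 2 := by
      intro k
      have e : ∀ k' : Fin 4, (if k = k' then (1:ℂ) else 1/3)
          = 1/3 + if k = k' then 2/3 else 0 := by
        intro k'; split <;> norm_num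
      simp only [e, Finset.sum_add_distrib, Finset.sum_ite_eq, Finset.mem_univ, if_true,
        Finset.sum_const, Finset.card_univ]
      norm_num
    simp only [hrow]
    norm_num
  have hzero : ∑ a : Fin 2, ∑ b : Fin 2,
      ((Complex.normSq (S a b - if a = b then 2 else 0) : ℝ) : ℂ) = 0 := by
    have expand : ∀ a b : Fin 2,
        ((Complex.normSq (S a b - if a = b then 2 else 0) : ℝ) : ℂ)
        = S a b * S b a - (if a = b then (2:ℂ) else 0) * (S a b + S b a)
          + (if a = b then (4:ℂ) else 0) := by
      intro a b
      rw [← Complex.mul_conj, map_sub, hconj]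
      have e : (starRingEnd ℂ) (if a = b then (2:ℂ) else 0) = if a = b then 2 else 0 := by
        split <;> simp [Complex.conj_ofNat]
      rw [e]
      split <;> ring
    simp only [expand, Finset.sum_add_distrib, Finset.sum_sub_distrib]
    have h16 : ∑ a : Fin 2, ∑ b : Fin 2,
        (if a = b then (2:ℂ) else 0) * (S a b + S b a) = 16 := by
      simp only [ite_mul, zero_mul, Finset.sum_ite_eq, Finset.mem_univ, if_true]
      have e : ∑ a : Fin 2, (2:ℂ) * (S a a + S a a) = 4 * ∑ a, S a a := by
        rw [Finset.mul_sum]; exact Finset.sum_congr rfl fun a _ => by ring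
      rw [e, htr]; norm_num
    have h4 : ∑ a : Fin 2, ∑ b : Fin 2, (if a = b then (4:ℂ) else 0) = 8 := by
      simp [Finset.sum_ite_eq]
      norm_num
    rw [h8, h16, h4]
    norm_num
  have hreal : ∑ a : Fin 2, ∑ b : Fin 2,
      Complex.normSq (S a b - if a = b then 2 else 0) = 0 := by
    exact_mod_cast hzero
  have hab : Complex.normSq (S a b - if a = b then 2 else 0) = 0 := by
    have h1 := (Finset.sum_eq_zero_iff_of_nonneg
      (fun a _ => Finset.sum_nonneg fun b _ => Complex.normSq_nonneg _)).mp hreal a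
      (Finset.mem_univ a)
    exact (Finset.sum_eq_zero_iff_of_nonneg
      (fun b _ => Complex.normSq_nonneg _)).mp h1 b (Finset.mem_univ b)
  have := sub_eq_zero.mp (Complex.normSq_eq_zero.mp hab)
  exact this

lemma prod_sic_sum {n : ℕ} (ψ : Fin n → Fin 4 → Fin 2 → ℂ) (hψ : ∀ i, IsSICPOVM (ψ i))
    (x y : Fin n → Fin 2) :
    ∑ k : Fin n → Fin 4, (starRingEnd ℂ) (prodState ψ k x) * prodState ψ k y
      = if x = y then (2:ℂ)^n else 0 := by
  have e : ∀ k, (starRingEnd ℂ) (prodState ψ k x) * prodState ψ k y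
      = ∏ i, (starRingEnd ℂ) (ψ i (k i) (x i)) * ψ i (k i) (y i) := by
    intro k; simp [prodState, map_prod, Finset.prod_mul_distrib]
  simp only [e]
  rw [(Fintype.prod_sum
    (fun (i : Fin n) (t : Fin 4) => (starRingEnd ℂ) (ψ i t (x i)) * ψ i t (y i))).symm]
  have e2 : ∀ i, ∑ t : Fin 4, (starRingEnd ℂ) (ψ i t (x i)) * ψ i t (y i)
      = if x i = y i then 2 else 0 := fun i => sic_sum (ψ i) (hψ i) (x i) (y i)
  simp only [e2]
  by_cases hxy : x = y
  · subst hxy; simp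
  · obtain ⟨i, hi⟩ := Function.ne_iff.mp hxy
    rw [if_neg hxy]
    exact Finset.prod_eq_zero (Finset.mem_univ i) (if_neg hi)

lemma prodState_norm {n : ℕ} (ψ : Fin n → Fin 4 → Fin 2 → ℂ) (hψ : ∀ i, IsSICPOVM (ψ i))
    (k : Fin n → Fin 4) :
    ∑ x : Fin n → Fin 2, (starRingEnd ℂ) (prodState ψ k x) * prodState ψ k x = 1 := by
  have e : ∀ x, (starRingEnd ℂ) (prodState ψ k x) * prodState ψ k x
      = ∏ i, (starRingEnd ℂ) (ψ i (k i) (x i)) * ψ i (k i) (x i) := by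
    intro x; simp [prodState, map_prod, Finset.prod_mul_distrib]
  simp only [e]
  rw [(Fintype.prod_sum
    (fun (i : Fin n) (t : Fin 2) => (starRingEnd ℂ) (ψ i (k i) t) * ψ i (k i) t)).symm]
  have e2 : ∀ i, ∑ t : Fin 2, (starRingEnd ℂ) (ψ i (k i) t) * ψ i (k i) t = 1 :=
    fun i => (hψ i).1 (k i)
  simp [e2]

/-- `φ` is an eigenvector of `Γ` with eigenvalue `d = 2^n`. -/
theorem Gam_mulVec_maxEnt (n : ℕ) (hn : 1 ≤ n)
    (ψ : Fin n → Fin 4 → Fin 2 → ℂ) (hψ : ∀ i, IsSICPOVM (ψ i)) :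
    (Gam ψ).mulVec (maxEnt n) = ((2 : ℂ) ^ n) • maxEnt n := by
  funext p
  obtain ⟨p1, p2⟩ := p
  set c : ℂ := (((Real.sqrt (2 ^ n))⁻¹ : ℝ) : ℂ) with hc
  have lhs : (Gam ψ).mulVec (maxEnt n) (p1, p2)
      = ∑ x : Fin n → Fin 2, (Gam ψ) (p1, p2) (x, x) * c := by
    show ∑ q : (Fin n → Fin 2) × (Fin n → Fin 2), (Gam ψ) (p1, p2) q * maxEnt n q = _
    rw [Fintype.sum_prod_type]
    simp only [maxEnt, mul_ite, mul_zero, ← hc]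
    simp [Finset.sum_ite_eq, Finset.mem_univ]
  rw [lhs]
  have entry : ∀ x : Fin n → Fin 2, (Gam ψ) (p1, p2) (x, x)
      = ∑ k : Fin n → Fin 4,
        (prodState ψ k x * (starRingEnd ℂ) (prodState ψ k p1)) *
        (prodState ψ k p2 * (starRingEnd ℂ) (prodState ψ k x)) := by
    intro x
    simp [Gam, Matrix.sum_apply, kroneckerMap_apply, transpose_apply, proj,
      vecMulVec_apply, Pi.star_apply, Complex.star_def]
    exact Finset.sum_congr rfl fun k _ => by ring
  simp only [entry]
  have main : ∑ x : Fin n → Fin 2, (∑ k : Fin n → Fin 4,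
        (prodState ψ k x * (starRingEnd ℂ) (prodState ψ k p1)) *
        (prodState ψ k p2 * (starRingEnd ℂ) (prodState ψ k x)))
      = if p1 = p2 then (2:ℂ)^n else 0 := by
    rw [Finset.sum_comm]
    have inner : ∀ k : Fin n → Fin 4, ∑ x : Fin n → Fin 2,
        (prodState ψ k x * (starRingEnd ℂ) (prodState ψ k p1)) *
        (prodState ψ k p2 * (starRingEnd ℂ) (prodState ψ k x))
        = (starRingEnd ℂ) (prodState ψ k p1) * prodState ψ k p2 := by
      intro k
      have e : ∀ x : Fin n → Fin 2,
          (prodState ψ k x * (starRingEnd ℂ) (prodState ψ k p1)) *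
          (prodState ψ k p2 * (starRingEnd ℂ) (prodState ψ k x))
          = ((starRingEnd ℂ) (prodState ψ k p1) * prodState ψ k p2) *
            ((starRingEnd ℂ) (prodState ψ k x) * prodState ψ k x) := fun x => by ring
      simp only [e]
      rw [← Finset.mul_sum, prodState_norm ψ hψ k, mul_one]
    simp only [inner]
    exact prod_sic_sum ψ hψ p1 p2
  rw [← Finset.sum_mul, main]
  simp only [Pi.smul_apply, maxEnt, smul_eq_mul, ← hc]
  split <;> ring
end
end

section
/- Let n ≥ 1, d = 2^n, let Γ = Σ_k (ψ_k ψ_k†)^T ⊗ (ψ_k ψ_k†) be built from tensor products ψ_k = ψ_{1,k_1} ⊗ ⋯ ⊗ ψ_{n,k_n} of single-qubit SIC-POVM states, and let φ = (1/√d) Σ_{x=1}^d e_x ⊗ e_x ∈ ℂ^{d²}. Then for every vector v ∈ ℂ^{d²} orthogonal to φ, one has ⟨v, Γ v⟩ ≤ (d/3)·‖v‖². -/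
open Matrix Polynomial
open scoped Kronecker ComplexOrder Classical

noncomputable section

lemma sic_design (ψ : Fin 4 → Fin 2 → ℂ) (h : IsSICPOVM ψ) (a b c e : Fin 2) :
    ∑ κ : Fin 4, ψ κ a * ψ κ b * (starRingEnd ℂ) (ψ κ c) * (starRingEnd ℂ) (ψ κ e)
      = 2/3 * ((if a = c then 1 else 0) * (if b = e then 1 else 0)
             + (if a = e then 1 else 0) * (if b = c then 1 else 0)) := by
  obtain ⟨h1, h2⟩ := h
  have hn : ∀ κ : Fin 4,
      (starRingEnd ℂ) (ψ κ 0) * ψ κ 0 + (starRingEnd ℂ) (ψ κ 1) * ψ κ 1 = 1 := by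
    intro κ
    have := h1 κ
    simpa [cinner, Fin.sum_univ_two] using this
  have ho : ∀ κ κ' : Fin 4, κ ≠ κ' →
      ((starRingEnd ℂ) (ψ κ 0) * ψ κ' 0 + (starRingEnd ℂ) (ψ κ 1) * ψ κ' 1) *
      (ψ κ 0 * (starRingEnd ℂ) (ψ κ' 0) + ψ κ 1 * (starRingEnd ℂ) (ψ κ' 1)) = 1/3 := by
    intro κ κ' hkk
    have h3 := h2 κ κ' hkk
    have hns : Complex.normSq (cinner (ψ κ) (ψ κ')) = 1/3 := by
      rw [← Complex.sq_norm]; exact h3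
    have hmc := Complex.mul_conj (cinner (ψ κ) (ψ κ'))
    rw [hns] at hmc
    calc ((starRingEnd ℂ) (ψ κ 0) * ψ κ' 0 + (starRingEnd ℂ) (ψ κ 1) * ψ κ' 1) *
        (ψ κ 0 * (starRingEnd ℂ) (ψ κ' 0) + ψ κ 1 * (starRingEnd ℂ) (ψ κ' 1))
        = cinner (ψ κ) (ψ κ') * (starRingEnd ℂ) (cinner (ψ κ) (ψ κ')) := by
          simp only [cinner, Fin.sum_univ_two, _root_.map_add, _root_.map_mul, RingHom.id_apply,
            Complex.conj_conj]
      _ = 1/3 := by rw [hmc]; norm_num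
  set F : Fin 2 → Fin 2 → Fin 2 → Fin 2 → ℂ := fun a b c e =>
    (∑ κ : Fin 4, ψ κ a * ψ κ b * (starRingEnd ℂ) (ψ κ c) * (starRingEnd ℂ) (ψ κ e))
    - 2/3 * ((if a = c then 1 else 0) * (if b = e then 1 else 0)
           + (if a = e then 1 else 0) * (if b = c then 1 else 0)) with hF
  have key : ∑ a : Fin 2, ∑ b : Fin 2, ∑ c : Fin 2, ∑ e : Fin 2,
      F a b c e * F c e a b = 0 := by
    simp only [hF, Fin.sum_univ_four, Fin.sum_univ_two]
    norm_num
    linear_combination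
      (((starRingEnd ℂ) (ψ 0 0) * ψ 0 0 + (starRingEnd ℂ) (ψ 0 1) * ψ 0 1)^3 + ((starRingEnd ℂ) (ψ 0 0) * ψ 0 0 + (starRingEnd ℂ) (ψ 0 1) * ψ 0 1)^2 + ((starRingEnd ℂ) (ψ 0 0) * ψ 0 0 + (starRingEnd ℂ) (ψ 0 1) * ψ 0 1) + 1 - (8/3) * (((starRingEnd ℂ) (ψ 0 0) * ψ 0 0 + (starRingEnd ℂ) (ψ 0 1) * ψ 0 1) + 1)) * hn 0
      + (((starRingEnd ℂ) (ψ 1 0) * ψ 1 0 + (starRingEnd ℂ) (ψ 1 1) * ψ 1 1)^3 + ((starRingEnd ℂ) (ψ 1 0) * ψ 1 0 + (starRingEnd ℂ) (ψ 1 1) * ψ 1 1)^2 + ((starRingEnd ℂ) (ψ 1 0) * ψ 1 0 + (starRingEnd ℂ) (ψ 1 1) * ψ 1 1) + 1 - (8/3) * (((starRingEnd ℂ) (ψ 1 0) * ψ 1 0 + (starRingEnd ℂ) (ψ 1 1) * ψ 1 1) + 1)) * hn 1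
      + (((starRingEnd ℂ) (ψ 2 0) * ψ 2 0 + (starRingEnd ℂ) (ψ 2 1) * ψ 2 1)^3 + ((starRingEnd ℂ) (ψ 2 0) * ψ 2 0 + (starRingEnd ℂ) (ψ 2 1) * ψ 2 1)^2 + ((starRingEnd ℂ) (ψ 2 0) * ψ 2 0 + (starRingEnd ℂ) (ψ 2 1) * ψ 2 1) + 1 - (8/3) * (((starRingEnd ℂ) (ψ 2 0) * ψ 2 0 + (starRingEnd ℂ) (ψ 2 1) * ψ 2 1) + 1)) * hn 2
      + (((starRingEnd ℂ) (ψ 3 0) * ψ 3 0 + (starRingEnd ℂ) (ψ 3 1) * ψ 3 1)^3 + ((starRingEnd ℂ) (ψ 3 0) * ψ 3 0 + (starRingEnd ℂ) (ψ 3 1) * ψ 3 1)^2 + ((starRingEnd ℂ) (ψ 3 0) * ψ 3 0 + (starRingEnd ℂ) (ψ 3 1) * ψ 3 1) + 1 - (8/3) * (((starRingEnd ℂ) (ψ 3 0) * ψ 3 0 + (starRingEnd ℂ) (ψ 3 1) * ψ 3 1) + 1)) * hn 3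
      + ((((starRingEnd ℂ) (ψ 0 0) * ψ 1 0 + (starRingEnd ℂ) (ψ 0 1) * ψ 1 1) * (ψ 0 0 * (starRingEnd ℂ) (ψ 1 0) + ψ 0 1 * (starRingEnd ℂ) (ψ 1 1))) + 1/3) * ho 0 1 (by decide)
      + ((((starRingEnd ℂ) (ψ 0 0) * ψ 2 0 + (starRingEnd ℂ) (ψ 0 1) * ψ 2 1) * (ψ 0 0 * (starRingEnd ℂ) (ψ 2 0) + ψ 0 1 * (starRingEnd ℂ) (ψ 2 1))) + 1/3) * ho 0 2 (by decide)
      + ((((starRingEnd ℂ) (ψ 0 0) * ψ 3 0 + (starRingEnd ℂ) (ψ 0 1) * ψ 3 1) * (ψ 0 0 * (starRingEnd ℂ) (ψ 3 0) + ψ 0 1 * (starRingEnd ℂ) (ψ 3 1))) + 1/3) * ho 0 3 (by decide)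
      + ((((starRingEnd ℂ) (ψ 1 0) * ψ 0 0 + (starRingEnd ℂ) (ψ 1 1) * ψ 0 1) * (ψ 1 0 * (starRingEnd ℂ) (ψ 0 0) + ψ 1 1 * (starRingEnd ℂ) (ψ 0 1))) + 1/3) * ho 1 0 (by decide)
      + ((((starRingEnd ℂ) (ψ 1 0) * ψ 2 0 + (starRingEnd ℂ) (ψ 1 1) * ψ 2 1) * (ψ 1 0 * (starRingEnd ℂ) (ψ 2 0) + ψ 1 1 * (starRingEnd ℂ) (ψ 2 1))) + 1/3) * ho 1 2 (by decide)
      + ((((starRingEnd ℂ) (ψ 1 0) * ψ 3 0 + (starRingEnd ℂ) (ψ 1 1) * ψ 3 1) * (ψ 1 0 * (starRingEnd ℂ) (ψ 3 0) + ψ 1 1 * (starRingEnd ℂ) (ψ 3 1))) + 1/3) * ho 1 3 (by decide)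
      + ((((starRingEnd ℂ) (ψ 2 0) * ψ 0 0 + (starRingEnd ℂ) (ψ 2 1) * ψ 0 1) * (ψ 2 0 * (starRingEnd ℂ) (ψ 0 0) + ψ 2 1 * (starRingEnd ℂ) (ψ 0 1))) + 1/3) * ho 2 0 (by decide)
      + ((((starRingEnd ℂ) (ψ 2 0) * ψ 1 0 + (starRingEnd ℂ) (ψ 2 1) * ψ 1 1) * (ψ 2 0 * (starRingEnd ℂ) (ψ 1 0) + ψ 2 1 * (starRingEnd ℂ) (ψ 1 1))) + 1/3) * ho 2 1 (by decide)
      + ((((starRingEnd ℂ) (ψ 2 0) * ψ 3 0 + (starRingEnd ℂ) (ψ 2 1) * ψ 3 1) * (ψ 2 0 * (starRingEnd ℂ) (ψ 3 0) + ψ 2 1 * (starRingEnd ℂ) (ψ 3 1))) + 1/3) * ho 2 3 (by decide)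
      + ((((starRingEnd ℂ) (ψ 3 0) * ψ 0 0 + (starRingEnd ℂ) (ψ 3 1) * ψ 0 1) * (ψ 3 0 * (starRingEnd ℂ) (ψ 0 0) + ψ 3 1 * (starRingEnd ℂ) (ψ 0 1))) + 1/3) * ho 3 0 (by decide)
      + ((((starRingEnd ℂ) (ψ 3 0) * ψ 1 0 + (starRingEnd ℂ) (ψ 3 1) * ψ 1 1) * (ψ 3 0 * (starRingEnd ℂ) (ψ 1 0) + ψ 3 1 * (starRingEnd ℂ) (ψ 1 1))) + 1/3) * ho 3 1 (by decide)
      + ((((starRingEnd ℂ) (ψ 3 0) * ψ 2 0 + (starRingEnd ℂ) (ψ 3 1) * ψ 2 1) * (ψ 3 0 * (starRingEnd ℂ) (ψ 2 0) + ψ 3 1 * (starRingEnd ℂ) (ψ 2 1))) + 1/3) * ho 3 2 (by decide)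
  have hconj : ∀ a b c e : Fin 2, (starRingEnd ℂ) (F a b c e) = F c e a b := by
    intro a b c e
    fin_cases a <;> fin_cases b <;> fin_cases c <;> fin_cases e <;>
      simp only [hF, Fin.sum_univ_four, _root_.map_sub, _root_.map_add, _root_.map_mul, _root_.map_sum,
        Complex.conj_conj, _root_.map_ofNat, _root_.map_one, _root_.map_zero, _root_.map_div₀, Fin.isValue] <;>
      norm_num <;> ring
  have key2 : ∑ a : Fin 2, ∑ b : Fin 2, ∑ c : Fin 2, ∑ e : Fin 2,
      (Complex.normSq (F a b c e) : ℝ) = 0 := by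
    have : ((∑ a : Fin 2, ∑ b : Fin 2, ∑ c : Fin 2, ∑ e : Fin 2,
        (Complex.normSq (F a b c e) : ℝ) : ℝ) : ℂ) = 0 := by
      push_cast
      rw [← key]
      refine Finset.sum_congr rfl fun a _ => Finset.sum_congr rfl fun b _ =>
        Finset.sum_congr rfl fun c _ => Finset.sum_congr rfl fun e _ => ?_
      rw [← hconj a b c e, Complex.mul_conj]
    exact_mod_cast this
  have hzero : F a b c e = 0 := by
    have hterm : Complex.normSq (F a b c e) = 0 := by
      have o1 : ∀ a : Fin 2, (0:ℝ) ≤ ∑ b : Fin 2, ∑ c : Fin 2, ∑ e : Fin 2,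
          (Complex.normSq (F a b c e) : ℝ) := fun a =>
        Finset.sum_nonneg fun b _ => Finset.sum_nonneg fun c _ =>
          Finset.sum_nonneg fun e _ => Complex.normSq_nonneg _
      have s1 := (Finset.sum_eq_zero_iff_of_nonneg (fun a _ => o1 a)).mp key2 a
        (Finset.mem_univ a)
      have o2 : ∀ b : Fin 2, (0:ℝ) ≤ ∑ c : Fin 2, ∑ e : Fin 2,
          (Complex.normSq (F a b c e) : ℝ) := fun b =>
        Finset.sum_nonneg fun c _ => Finset.sum_nonneg fun e _ => Complex.normSq_nonneg _
      have s2 := (Finset.sum_eq_zero_iff_of_nonneg (fun b _ => o2 b)).mp s1 b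
        (Finset.mem_univ b)
      have o3 : ∀ c : Fin 2, (0:ℝ) ≤ ∑ e : Fin 2,
          (Complex.normSq (F a b c e) : ℝ) := fun c =>
        Finset.sum_nonneg fun e _ => Complex.normSq_nonneg _
      have s3 := (Finset.sum_eq_zero_iff_of_nonneg (fun c _ => o3 c)).mp s2 c
        (Finset.mem_univ c)
      exact (Finset.sum_eq_zero_iff_of_nonneg
        (fun e _ => Complex.normSq_nonneg _)).mp s3 e (Finset.mem_univ e)
    exact Complex.normSq_eq_zero.mp hterm
  have := hzero
  rw [hF] at this
  exact sub_eq_zero.mp this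


def MB (κ : Fin 4) (a b : Fin 2) : ℝ :=
  if κ = 0 then (if a = b then (Real.sqrt 2)⁻¹ else 0)
  else if κ = 1 then
    (if a = 0 ∧ b = 0 then (Real.sqrt 2)⁻¹ else if a = 1 ∧ b = 1 then -(Real.sqrt 2)⁻¹ else 0)
  else if κ = 2 then (if a = 0 ∧ b = 1 then 1 else 0)
  else (if a = 1 ∧ b = 0 then 1 else 0)

def lam (κ : Fin 4) : ℝ := if κ = 0 then 2 else 2/3

lemma lam_nonneg (κ : Fin 4) : 0 ≤ lam κ := by unfold lam; split <;> norm_num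

lemma lam_le_two (κ : Fin 4) : lam κ ≤ 2 := by unfold lam; split <;> norm_num

lemma lam_of_ne (κ : Fin 4) (h : κ ≠ 0) : lam κ = 2/3 := by simp [lam, h]

lemma sqrt2_inv_sq : (Real.sqrt 2)⁻¹ * (Real.sqrt 2)⁻¹ = 1/2 := by
  rw [← mul_inv, Real.mul_self_sqrt (by norm_num : (0:ℝ) ≤ 2)]
  norm_num

lemma MB_complete (a b c e : Fin 2) :
    ∑ κ : Fin 4, ((MB κ a b : ℂ)) * (MB κ c e : ℂ)
      = (if a = c then 1 else 0) * (if b = e then 1 else 0) := by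
  have h2c : ((Real.sqrt 2 : ℝ) : ℂ)⁻¹ * ((Real.sqrt 2 : ℝ) : ℂ)⁻¹ = 1/2 := by
    rw [← Complex.ofReal_inv, ← Complex.ofReal_mul, sqrt2_inv_sq]; norm_num
  fin_cases a <;> fin_cases b <;> fin_cases c <;> fin_cases e <;>
    · norm_num [MB, Fin.sum_univ_four, show (2:Fin 4) ≠ 0 from by decide,
        show (2:Fin 4) ≠ 1 from by decide, show (3:Fin 4) ≠ 0 from by decide,
        show (3:Fin 4) ≠ 1 from by decide, show (3:Fin 4) ≠ 2 from by decide,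
        show (0:Fin 2) ≠ 1 from by decide, show (1:Fin 2) ≠ 0 from by decide]
      try simp only [h2c]
      try norm_num

lemma MB_design (a b c e : Fin 2) :
    ∑ κ : Fin 4, ((lam κ : ℂ)) * ((MB κ a b : ℂ) * (MB κ c e : ℂ))
      = 2/3 * ((if a = c then 1 else 0) * (if b = e then 1 else 0)
             + (if a = b then 1 else 0) * (if c = e then 1 else 0)) := by
  have h2c : ((Real.sqrt 2 : ℝ) : ℂ)⁻¹ * ((Real.sqrt 2 : ℝ) : ℂ)⁻¹ = 1/2 := by
    rw [← Complex.ofReal_inv, ← Complex.ofReal_mul, sqrt2_inv_sq]; norm_num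
  fin_cases a <;> fin_cases b <;> fin_cases c <;> fin_cases e <;>
    · norm_num [MB, lam, Fin.sum_univ_four, show (2:Fin 4) ≠ 0 from by decide,
        show (2:Fin 4) ≠ 1 from by decide, show (3:Fin 4) ≠ 0 from by decide,
        show (3:Fin 4) ≠ 1 from by decide, show (3:Fin 4) ≠ 2 from by decide,
        show (0:Fin 2) ≠ 1 from by decide, show (1:Fin 2) ≠ 0 from by decide]
      try simp only [h2c]
      try norm_num

lemma Gam_apply {n : ℕ} (ψ : Fin n → Fin 4 → Fin 2 → ℂ) (hψ : ∀ i, IsSICPOVM (ψ i))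
    (x y x' y' : Fin n → Fin 2) :
    Gam ψ (x, y) (x', y') =
      ∏ i, ((2:ℂ)/3 * ((if x i = x' i then 1 else 0) * (if y i = y' i then 1 else 0)
        + (if x i = y i then 1 else 0) * (if x' i = y' i then 1 else 0))) := by
  have step1 : Gam ψ (x, y) (x', y') =
      ∑ k : Fin n → Fin 4, ∏ i,
        (ψ i (k i) (x' i) * ψ i (k i) (y i) *
          (starRingEnd ℂ) (ψ i (k i) (x i)) * (starRingEnd ℂ) (ψ i (k i) (y' i))) := by
    simp only [Gam, Matrix.sum_apply, Matrix.kroneckerMap_apply, Matrix.transpose_apply,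
      proj, Matrix.vecMulVec_apply, Pi.star_apply, prodState]
    refine Finset.sum_congr rfl fun k _ => ?_
    rw [show star (∏ i, ψ i (k i) (x i)) = ∏ i, (starRingEnd ℂ) (ψ i (k i) (x i)) by
        rw [← _root_.map_prod]; rfl,
      show star (∏ i, ψ i (k i) (y' i)) = ∏ i, (starRingEnd ℂ) (ψ i (k i) (y' i)) by
        rw [← _root_.map_prod]; rfl]
    rw [← Finset.prod_mul_distrib, ← Finset.prod_mul_distrib, ← Finset.prod_mul_distrib]
    exact Finset.prod_congr rfl fun i _ => by ring
  rw [step1, ← Fintype.piFinset_univ,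
    ← Finset.prod_univ_sum (fun _ => (Finset.univ : Finset (Fin 4)))
      (fun i κ => ψ i κ (x' i) * ψ i κ (y i) *
        (starRingEnd ℂ) (ψ i κ (x i)) * (starRingEnd ℂ) (ψ i κ (y' i)))]
  refine Finset.prod_congr rfl fun i _ => ?_
  rw [sic_design (ψ i) (hψ i) (x' i) (y i) (x i) (y' i)]
  have e1 : (if x' i = x i then (1:ℂ) else 0) = if x i = x' i then 1 else 0 := by
    simp [eq_comm]
  have e2 : (if y i = x i then (1:ℂ) else 0) = if x i = y i then 1 else 0 := by
    simp [eq_comm]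
  rw [e1, e2]; ring

def Cf {n : ℕ} (j : Fin n → Fin 4) (p : (Fin n → Fin 2) × (Fin n → Fin 2)) : ℂ :=
  ∏ i, ((MB (j i) (p.1 i) (p.2 i) : ℝ) : ℂ)

def Wf {n : ℕ} (v : (Fin n → Fin 2) × (Fin n → Fin 2) → ℂ) (j : Fin n → Fin 4) : ℂ :=
  ∑ p, Cf j p * v p

def Lf {n : ℕ} (j : Fin n → Fin 4) : ℝ := ∏ i, lam (j i)

lemma Cf_conj {n : ℕ} (j : Fin n → Fin 4) (p) :
    (starRingEnd ℂ) (Cf j p) = Cf j p := by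
  rw [Cf, _root_.map_prod]
  exact Finset.prod_congr rfl fun i _ => Complex.conj_ofReal _

lemma prod_delta {n : ℕ} (p q : (Fin n → Fin 2) × (Fin n → Fin 2)) :
    (∏ i, ((if p.1 i = q.1 i then (1:ℂ) else 0) * (if p.2 i = q.2 i then 1 else 0)))
      = if p = q then 1 else 0 := by
  by_cases h : p = q
  · subst h; simp
  · rw [if_neg h]
    have hex : ∃ i, p.1 i ≠ q.1 i ∨ p.2 i ≠ q.2 i := by
      by_contra hc
      push_neg at hc
      exact h (Prod.ext (funext fun i => (hc i).1) (funext fun i => (hc i).2))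
    obtain ⟨i, hi⟩ := hex
    refine Finset.prod_eq_zero (Finset.mem_univ i) ?_
    rcases hi with hi | hi <;> simp [hi]

lemma Cf_sum {n : ℕ} (p q : (Fin n → Fin 2) × (Fin n → Fin 2)) :
    (∑ j : Fin n → Fin 4, Cf j p * Cf j q) = if p = q then 1 else 0 := by
  calc ∑ j : Fin n → Fin 4, Cf j p * Cf j q
      = ∑ j : Fin n → Fin 4, ∏ i,
          (((MB (j i) (p.1 i) (p.2 i) : ℝ) : ℂ) * ((MB (j i) (q.1 i) (q.2 i) : ℝ) : ℂ)) := by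
        refine Finset.sum_congr rfl fun j _ => ?_
        rw [Cf, Cf, Finset.prod_mul_distrib]
    _ = ∏ i, ∑ κ : Fin 4,
          (((MB κ (p.1 i) (p.2 i) : ℝ) : ℂ) * ((MB κ (q.1 i) (q.2 i) : ℝ) : ℂ)) := by
        rw [← Fintype.piFinset_univ,
          ← Finset.prod_univ_sum (fun _ => (Finset.univ : Finset (Fin 4)))
            (fun i κ => ((MB κ (p.1 i) (p.2 i) : ℝ) : ℂ) * ((MB κ (q.1 i) (q.2 i) : ℝ) : ℂ))]
    _ = ∏ i, ((if p.1 i = q.1 i then (1:ℂ) else 0) * (if p.2 i = q.2 i then 1 else 0)) :=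
        Finset.prod_congr rfl fun i _ => MB_complete _ _ _ _
    _ = if p = q then 1 else 0 := prod_delta p q

lemma Gam_entry {n : ℕ} (ψ : Fin n → Fin 4 → Fin 2 → ℂ) (hψ : ∀ i, IsSICPOVM (ψ i))
    (p q : (Fin n → Fin 2) × (Fin n → Fin 2)) :
    Gam ψ p q = ∑ j : Fin n → Fin 4, ((Lf j : ℝ) : ℂ) * (Cf j p * Cf j q) := by
  have h0 : Gam ψ p q = Gam ψ (p.1, p.2) (q.1, q.2) := rfl
  rw [h0, Gam_apply ψ hψ p.1 p.2 q.1 q.2]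
  calc ∏ i, ((2:ℂ)/3 * ((if p.1 i = q.1 i then 1 else 0) * (if p.2 i = q.2 i then 1 else 0)
        + (if p.1 i = p.2 i then 1 else 0) * (if q.1 i = q.2 i then 1 else 0)))
      = ∏ i, ∑ κ : Fin 4, (((lam κ : ℝ)) : ℂ) *
          (((MB κ (p.1 i) (p.2 i) : ℝ) : ℂ) * ((MB κ (q.1 i) (q.2 i) : ℝ) : ℂ)) := by
        refine Finset.prod_congr rfl fun i _ => ?_
        rw [MB_design (p.1 i) (p.2 i) (q.1 i) (q.2 i)]
    _ = ∑ j : Fin n → Fin 4, ∏ i, (((lam (j i) : ℝ)) : ℂ) *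
          (((MB (j i) (p.1 i) (p.2 i) : ℝ) : ℂ) * ((MB (j i) (q.1 i) (q.2 i) : ℝ) : ℂ)) := by
        rw [Finset.prod_univ_sum (fun _ => (Finset.univ : Finset (Fin 4)))
            (fun i κ => (((lam κ : ℝ)) : ℂ) *
              (((MB κ (p.1 i) (p.2 i) : ℝ) : ℂ) * ((MB κ (q.1 i) (q.2 i) : ℝ) : ℂ))),
          Fintype.piFinset_univ]
    _ = ∑ j : Fin n → Fin 4, ((Lf j : ℝ) : ℂ) * (Cf j p * Cf j q) := by
        refine Finset.sum_congr rfl fun j _ => ?_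
        rw [Lf, Cf, Cf]
        push_cast
        rw [← Finset.prod_mul_distrib, ← Finset.prod_mul_distrib]

lemma quad_eq {n : ℕ} (ψ : Fin n → Fin 4 → Fin 2 → ℂ) (hψ : ∀ i, IsSICPOVM (ψ i))
    (v : (Fin n → Fin 2) × (Fin n → Fin 2) → ℂ) :
    cinner v ((Gam ψ).mulVec v)
      = ∑ j : Fin n → Fin 4, ((Lf j : ℝ) : ℂ) * ((starRingEnd ℂ) (Wf v j) * Wf v j) := by
  have lhs_eq : cinner v ((Gam ψ).mulVec v)
      = ∑ p, ∑ q, ∑ j : Fin n → Fin 4,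
          ((Lf j : ℝ) : ℂ) * ((Cf j p * (starRingEnd ℂ) (v p)) * (Cf j q * v q)) := by
    calc cinner v ((Gam ψ).mulVec v)
        = ∑ p, (starRingEnd ℂ) (v p) * ∑ q, Gam ψ p q * v q := by
          simp only [cinner, Matrix.mulVec, dotProduct]
      _ = ∑ p, ∑ q, (starRingEnd ℂ) (v p) * (Gam ψ p q * v q) := by
          refine Finset.sum_congr rfl fun p _ => ?_
          rw [Finset.mul_sum]
      _ = ∑ p, ∑ q, ∑ j : Fin n → Fin 4,
            ((Lf j : ℝ) : ℂ) * ((Cf j p * (starRingEnd ℂ) (v p)) * (Cf j q * v q)) := by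
          refine Finset.sum_congr rfl fun p _ => Finset.sum_congr rfl fun q _ => ?_
          rw [Gam_entry ψ hψ p q, Finset.sum_mul, Finset.mul_sum]
          exact Finset.sum_congr rfl fun j _ => by ring
  have swap : ∑ p, ∑ q, ∑ j : Fin n → Fin 4,
      ((Lf j : ℝ) : ℂ) * ((Cf j p * (starRingEnd ℂ) (v p)) * (Cf j q * v q))
      = ∑ j : Fin n → Fin 4, ∑ p, ∑ q,
      ((Lf j : ℝ) : ℂ) * ((Cf j p * (starRingEnd ℂ) (v p)) * (Cf j q * v q)) := by
    calc ∑ p, ∑ q, ∑ j : Fin n → Fin 4,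
        ((Lf j : ℝ) : ℂ) * ((Cf j p * (starRingEnd ℂ) (v p)) * (Cf j q * v q))
        = ∑ p, ∑ j : Fin n → Fin 4, ∑ q,
        ((Lf j : ℝ) : ℂ) * ((Cf j p * (starRingEnd ℂ) (v p)) * (Cf j q * v q)) :=
          Finset.sum_congr rfl fun p _ => Finset.sum_comm
      _ = ∑ j : Fin n → Fin 4, ∑ p, ∑ q,
        ((Lf j : ℝ) : ℂ) * ((Cf j p * (starRingEnd ℂ) (v p)) * (Cf j q * v q)) :=
          Finset.sum_comm
  rw [lhs_eq, swap]
  refine Finset.sum_congr rfl fun j _ => ?_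
  have hconjW : (starRingEnd ℂ) (Wf v j) = ∑ p, Cf j p * (starRingEnd ℂ) (v p) := by
    rw [Wf, _root_.map_sum]
    exact Finset.sum_congr rfl fun p _ => by rw [_root_.map_mul, Cf_conj]
  rw [hconjW, Wf, Finset.sum_mul_sum, Finset.mul_sum]
  refine Finset.sum_congr rfl fun p _ => ?_
  rw [Finset.mul_sum]

lemma parseval {n : ℕ} (v : (Fin n → Fin 2) × (Fin n → Fin 2) → ℂ) :
    ∑ j : Fin n → Fin 4, (starRingEnd ℂ) (Wf v j) * Wf v j
      = ∑ p, (starRingEnd ℂ) (v p) * v p := by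
  have step : ∑ j : Fin n → Fin 4, (starRingEnd ℂ) (Wf v j) * Wf v j
      = ∑ p, ∑ q, ((starRingEnd ℂ) (v p) * v q) * ∑ j : Fin n → Fin 4, Cf j p * Cf j q := by
    calc ∑ j : Fin n → Fin 4, (starRingEnd ℂ) (Wf v j) * Wf v j
        = ∑ j : Fin n → Fin 4, ∑ p, ∑ q,
            (Cf j p * (starRingEnd ℂ) (v p)) * (Cf j q * v q) := by
          refine Finset.sum_congr rfl fun j _ => ?_
          have hconjW : (starRingEnd ℂ) (Wf v j) = ∑ p, Cf j p * (starRingEnd ℂ) (v p) := by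
            rw [Wf, _root_.map_sum]
            exact Finset.sum_congr rfl fun p _ => by rw [_root_.map_mul, Cf_conj]
          rw [hconjW, Wf, Finset.sum_mul_sum]
      _ = ∑ p, ∑ j : Fin n → Fin 4, ∑ q,
            (Cf j p * (starRingEnd ℂ) (v p)) * (Cf j q * v q) := Finset.sum_comm
      _ = ∑ p, ∑ q, ∑ j : Fin n → Fin 4,
            (Cf j p * (starRingEnd ℂ) (v p)) * (Cf j q * v q) :=
          Finset.sum_congr rfl fun p _ => Finset.sum_comm
      _ = ∑ p, ∑ q, ((starRingEnd ℂ) (v p) * v q) * ∑ j : Fin n → Fin 4, Cf j p * Cf j q := by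
          refine Finset.sum_congr rfl fun p _ => Finset.sum_congr rfl fun q _ => ?_
          rw [Finset.mul_sum]
          exact Finset.sum_congr rfl fun j _ => by ring
  rw [step]
  refine Finset.sum_congr rfl fun p _ => ?_
  have : ∀ q, ((starRingEnd ℂ) (v p) * v q) * (∑ j : Fin n → Fin 4, Cf j p * Cf j q)
      = if p = q then (starRingEnd ℂ) (v p) * v q else 0 := by
    intro q
    rw [Cf_sum p q]
    split_ifs <;> ring
  rw [Finset.sum_congr rfl fun q _ => this q, Finset.sum_ite_eq]
  simp

lemma W_zero {n : ℕ} (v : (Fin n → Fin 2) × (Fin n → Fin 2) → ℂ)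
    (hv : cinner (maxEnt n) v = 0) : Wf v (fun _ => (0 : Fin 4)) = 0 := by
  rw [← hv, cinner, Wf]
  refine Finset.sum_congr rfl fun p _ => ?_
  congr 1
  have hr : ((Real.sqrt 2)⁻¹ : ℝ) ^ n = (Real.sqrt (2 ^ n))⁻¹ := by
    rw [inv_pow]
    congr 1
    rw [show (2:ℝ) ^ n = (Real.sqrt 2 ^ n) ^ 2 by
        rw [← pow_mul, mul_comm, pow_mul, Real.sq_sqrt (by norm_num : (0:ℝ) ≤ 2)],
      Real.sqrt_sq (pow_nonneg (Real.sqrt_nonneg 2) n)]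
  by_cases h : p.1 = p.2
  · have h1 : Cf (fun _ => (0 : Fin 4)) p = (((Real.sqrt 2)⁻¹ : ℝ) : ℂ) ^ n := by
      rw [Cf]
      have : ∀ i, ((MB 0 (p.1 i) (p.2 i) : ℝ) : ℂ) = (((Real.sqrt 2)⁻¹ : ℝ) : ℂ) := by
        intro i
        have : p.1 i = p.2 i := congrFun h i
        simp [MB, this]
      rw [Finset.prod_congr rfl fun i _ => this i, Finset.prod_const, Finset.card_univ,
        Fintype.card_fin]
    rw [h1]
    have h2 : (starRingEnd ℂ) (maxEnt n p) = (((Real.sqrt (2 ^ n))⁻¹ : ℝ) : ℂ) := by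
      simp [maxEnt, h, Complex.conj_ofReal]
    rw [h2, ← hr]
    push_cast
    ring
  · have h1 : Cf (fun _ => (0 : Fin 4)) p = 0 := by
      have hex : ∃ i, p.1 i ≠ p.2 i := by
        by_contra hc
        push_neg at hc
        exact h (funext hc)
      obtain ⟨i, hi⟩ := hex
      refine Finset.prod_eq_zero (Finset.mem_univ i) ?_
      simp [MB, hi]
    rw [h1]
    simp [maxEnt, h]

lemma L_le {n : ℕ} (j : Fin n → Fin 4) (hj : j ≠ fun _ => 0) :
    Lf j ≤ 2 ^ n / 3 := by
  obtain ⟨i₀, hi₀⟩ := Function.ne_iff.mp hj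
  have hn : 1 ≤ n := i₀.pos
  have hi₀' : j i₀ ≠ 0 := hi₀
  rw [Lf, ← Finset.mul_prod_erase Finset.univ _ (Finset.mem_univ i₀), lam_of_ne _ hi₀']
  have hb : ∏ i ∈ Finset.univ.erase i₀, lam (j i) ≤ 2 ^ (n - 1) := by
    calc ∏ i ∈ Finset.univ.erase i₀, lam (j i)
        ≤ ∏ _i ∈ Finset.univ.erase i₀, (2:ℝ) :=
          Finset.prod_le_prod (fun i _ => lam_nonneg _) (fun i _ => lam_le_two _)
      _ = 2 ^ (n - 1) := by
          rw [Finset.prod_const, Finset.card_erase_of_mem (Finset.mem_univ i₀),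
            Finset.card_univ, Fintype.card_fin]
  calc 2/3 * ∏ i ∈ Finset.univ.erase i₀, lam (j i) ≤ 2/3 * 2 ^ (n-1) :=
        mul_le_mul_of_nonneg_left hb (by norm_num)
    _ = 2 ^ n / 3 := by
        have h2 : (2:ℝ) ^ n = 2 ^ (n-1) * 2 := by
          rw [← pow_succ]
          congr 1
          omega
        rw [h2]
        ring

/-- On the orthogonal complement of `φ`, the quadratic form of `Γ` is bounded by
    `(d/3)·‖v‖²`. -/
theorem Gam_quadForm_le_on_orthogonal (n : ℕ) (hn : 1 ≤ n)
    (ψ : Fin n → Fin 4 → Fin 2 → ℂ) (hψ : ∀ i, IsSICPOVM (ψ i)) :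
    ∀ v : (Fin n → Fin 2) × (Fin n → Fin 2) → ℂ,
      cinner (maxEnt n) v = 0 →
      (cinner v ((Gam ψ).mulVec v)).re ≤ (2 ^ n / 3 : ℝ) * ∑ a, Complex.normSq (v a) := by
  intro v hv
  have hQ : cinner v ((Gam ψ).mulVec v)
      = ((∑ j : Fin n → Fin 4, Lf j * Complex.normSq (Wf v j) : ℝ) : ℂ) := by
    rw [quad_eq ψ hψ v]
    push_cast
    refine Finset.sum_congr rfl fun j _ => ?_
    rw [mul_comm ((starRingEnd ℂ) (Wf v j)) (Wf v j), Complex.mul_conj]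
  have hP : ∑ j : Fin n → Fin 4, Complex.normSq (Wf v j) = ∑ p, Complex.normSq (v p) := by
    have := parseval v
    have h2 : ((∑ j : Fin n → Fin 4, Complex.normSq (Wf v j) : ℝ) : ℂ)
        = ((∑ p, Complex.normSq (v p) : ℝ) : ℂ) := by
      push_cast
      calc ∑ j : Fin n → Fin 4, (Complex.normSq (Wf v j) : ℂ)
          = ∑ j : Fin n → Fin 4, (starRingEnd ℂ) (Wf v j) * Wf v j := by
            refine Finset.sum_congr rfl fun j _ => ?_
            rw [mul_comm, Complex.mul_conj]
        _ = ∑ p, (starRingEnd ℂ) (v p) * v p := parseval v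
        _ = ∑ p, (Complex.normSq (v p) : ℂ) := by
            refine Finset.sum_congr rfl fun p _ => ?_
            rw [mul_comm, Complex.mul_conj]
    exact_mod_cast h2
  rw [hQ, Complex.ofReal_re, ← hP, Finset.mul_sum]
  refine Finset.sum_le_sum fun j _ => ?_
  by_cases hj : j = fun _ => (0 : Fin 4)
  · subst hj
    rw [W_zero v hv]
    simp
  · exact mul_le_mul_of_nonneg_right (L_le j hj) (Complex.normSq_nonneg _)
end
end
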